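/- Fix ω > 0, γ > 0, β > 0 and p with 0 ≤ p < p_e, where p_e = 1/(e^{2ωβ} + 1) and λ = γ/(2p_e − 1) (a colder initial probe). With a = (p_e − p)²/(p_e(1 − p_e)) and b = (p_e − p)(2p_e − 1)/(p_e(1 − p_e)), the function α(t) = 1 − a e^{2λt} + b e^{λt} satisfies 0 < α(t) < 1 for all t > 0, and α(t) → 1 as t → +∞. -/

import Mathlib

/-- For a colder initial probe (`0 ≤ p < p_e`), the normalized
population variance `α(t) = 1 − a e^{2λt} + b e^{λt}` satisfies `0 < α(t) < 1` for
all `t > 0`, and `α(t) → 1` as `t → +∞`. -/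
theorem cold_probe_stmt_11 (ω γ β p : ℝ) (hω : 0 < ω) (hγ : 0 < γ) (hβ : 0 < β)
    (pe lam a b : ℝ)
    (hpe : pe = 1 / (Real.exp (2 * ω * β) + 1))
    (hp0 : 0 ≤ p) (hpcold : p < pe)
    (hlam : lam = γ / (2 * pe - 1))
    (ha : a = (pe - p) ^ 2 / (pe * (1 - pe)))
    (hb : b = (pe - p) * (2 * pe - 1) / (pe * (1 - pe))) :
    (∀ t : ℝ, 0 < t →
        0 < 1 - a * Real.exp (2 * lam * t) + b * Real.exp (lam * t) ∧
          1 - a * Real.exp (2 * lam * t) + b * Real.exp (lam * t) < 1) ∧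
      Filter.Tendsto (fun t : ℝ => 1 - a * Real.exp (2 * lam * t) + b * Real.exp (lam * t))
        Filter.atTop (nhds 1) := by
  have hE : 1 < Real.exp (2 * ω * β) := by
    have h := Real.add_one_le_exp (2 * ω * β)
    nlinarith
  have hpe_pos : 0 < pe := by rw [hpe]; positivity
  have hpe_half : pe < 1 / 2 := by
    rw [hpe, div_lt_div_iff₀ (by positivity) (by norm_num)]
    linarith
  have hD : 0 < pe * (1 - pe) := by nlinarith
  have hlam_neg : lam < 0 := by
    rw [hlam]; exact div_neg_of_pos_of_neg hγ (by linarith)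
  have ha_pos : 0 < a := by
    rw [ha]; exact div_pos (pow_pos (by linarith) 2) hD
  have hb_neg : b < 0 := by
    rw [hb]
    exact div_neg_of_neg_of_pos (mul_neg_of_pos_of_neg (by linarith) (by linarith)) hD
  have key : ∀ s : ℝ, 1 - a * s ^ 2 + b * s
      = ((pe + s * (p - pe)) * (1 - (pe + s * (p - pe)))) / (pe * (1 - pe)) := by
    intro s
    rw [ha, hb]
    field_simp [hpe_pos.ne', (by linarith : (1 - pe) ≠ 0)]
    ring
  constructor
  · intro t ht
    set s := Real.exp (lam * t) with hs
    have hs_pos : 0 < s := Real.exp_pos _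
    have hs_lt : s < 1 := Real.exp_lt_one_iff.2 (mul_neg_of_neg_of_pos hlam_neg ht)
    have h2 : Real.exp (2 * lam * t) = s ^ 2 := by
      rw [hs, sq, ← Real.exp_add]; ring_nf
    have hq_pos : 0 < pe + s * (p - pe) := by nlinarith
    have hq_lt : pe + s * (p - pe) < 1 := by nlinarith
    constructor
    · rw [h2, key s]
      exact div_pos (mul_pos hq_pos (by linarith)) hD
    · rw [h2]
      nlinarith [mul_neg_of_neg_of_pos hb_neg hs_pos, mul_nonneg ha_pos.le (sq_nonneg s)]
  · have h1 : Filter.Tendsto (fun t : ℝ => lam * t) Filter.atTop Filter.atBot :=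
      (Filter.tendsto_const_mul_atBot_of_neg hlam_neg).2 Filter.tendsto_id
    have h2 : Filter.Tendsto (fun t : ℝ => 2 * lam * t) Filter.atTop Filter.atBot :=
      (Filter.tendsto_const_mul_atBot_of_neg (by linarith : 2 * lam < 0)).2 Filter.tendsto_id
    have e1 : Filter.Tendsto (fun t : ℝ => Real.exp (lam * t)) Filter.atTop (nhds 0) :=
      Real.tendsto_exp_atBot.comp h1
    have e2 : Filter.Tendsto (fun t : ℝ => Real.exp (2 * lam * t)) Filter.atTop (nhds 0) :=
      Real.tendsto_exp_atBot.comp h2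
    have h3 : Filter.Tendsto
        (fun t : ℝ => 1 - a * Real.exp (2 * lam * t) + b * Real.exp (lam * t))
        Filter.atTop (nhds (1 - a * 0 + b * 0)) :=
      ((tendsto_const_nhds (x := (1 : ℝ))).sub (e2.const_mul a)).add (e1.const_mul b)
    simpa using h3
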